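/- Let V be a finite-dimensional real vector space and let L₁, L₂ ⊆ V ⊕ V* be Lagrangian subspaces with respect to the canonical symmetric pairing. Then their tangential product L₁ ⋆ L₂ := {(v, α + β) : (v, α) ∈ L₁ and (v, β) ∈ L₂} is again a Lagrangian subspace of V ⊕ V*. -/

import Mathlib

/-- The canonical symmetric pairing on `V ⊕ V*`. -/
def canPair {V : Type*} [AddCommGroup V] [Module ℝ V]
    (x y : V × Module.Dual ℝ V) : ℝ :=
  x.2 y.1 + y.2 x.1

/-- A subset of `V ⊕ V*` is Lagrangian if it equals its own orthogonal complement
with respect to the canonical symmetric pairing. -/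
def IsLagrangian {V : Type*} [AddCommGroup V] [Module ℝ V]
    (L : Set (V × Module.Dual ℝ V)) : Prop :=
  L = {x | ∀ y ∈ L, canPair x y = 0}

namespace TangAux

variable {V : Type*} [AddCommGroup V] [Module ℝ V]

/-- The canonical pairing as a bilinear form. -/
def B : LinearMap.BilinForm ℝ (V × Module.Dual ℝ V) :=
  LinearMap.mk₂ ℝ (fun x y => x.2 y.1 + y.2 x.1)
    (by intros; simp; ring) (by intros; simp; ring)
    (by intros; simp; ring) (by intros; simp; ring)

@[simp] lemma B_apply (x y : V × Module.Dual ℝ V) : B x y = x.2 y.1 + y.2 x.1 := rfl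

lemma B_symm : ∀ x y : V × Module.Dual ℝ V, B x y = B y x := by
  intro x y; simp; ring

lemma B_nondeg : (B (V := V)).Nondegenerate := by
  have hL : ∀ x : V × Module.Dual ℝ V, (∀ y, B x y = 0) → x = 0 := by
    intro x h
    have h1 : x.1 = 0 := by
      rw [← Module.forall_dual_apply_eq_zero_iff ℝ x.1]
      intro γ; have := h (0, γ); simpa using this
    have h2 : x.2 = 0 := by
      ext w; have := h (w, 0); simpa using this
    exact Prod.ext h1 h2
  exact ⟨hL, fun y hy => hL y (fun x => by rw [B_symm]; exact hy x)⟩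

/-- The doubled bilinear form on `W × W`. -/
def B2 : LinearMap.BilinForm ℝ
    ((V × Module.Dual ℝ V) × (V × Module.Dual ℝ V)) :=
  LinearMap.mk₂ ℝ (fun a b => B a.1 b.1 + B a.2 b.2)
    (by intros; simp; ring) (by intros; simp; ring)
    (by intros; simp; ring) (by intros; simp; ring)

@[simp] lemma B2_apply (a b : (V × Module.Dual ℝ V) × (V × Module.Dual ℝ V)) :
    B2 a b = B a.1 b.1 + B a.2 b.2 := rfl

lemma B2_symm : ∀ a b, B2 (V := V) a b = B2 b a := by
  intro a b; simp [B_symm a.1 b.1, B_symm a.2 b.2]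

lemma B2_isRefl : (B2 (V := V)).IsRefl := by
  intro a b h; rw [B2_symm]; exact h

lemma B2_nondeg : (B2 (V := V)).Nondegenerate := by
  have hL : ∀ a : (V × Module.Dual ℝ V) × (V × Module.Dual ℝ V), (∀ b, B2 a b = 0) → a = 0 := by
    intro a h
    have h1 : a.1 = 0 := B_nondeg.1 a.1 (fun y => by simpa using h (y, 0))
    have h2 : a.2 = 0 := B_nondeg.1 a.2 (fun y => by simpa using h (0, y))
    exact Prod.ext h1 h2
  exact ⟨hL, fun y hy => hL y (fun x => by rw [B2_symm]; exact hy x)⟩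

end TangAux

namespace TangAux

variable {V : Type*} [AddCommGroup V] [Module ℝ V]

/-- A Lagrangian subset is a submodule. -/
def lagSub (L : Set (V × Module.Dual ℝ V)) (hL : IsLagrangian L) :
    Submodule ℝ (V × Module.Dual ℝ V) where
  carrier := L
  zero_mem' := by
    show (0 : V × Module.Dual ℝ V) ∈ L
    rw [hL]; intro y hy; simp [canPair]
  add_mem' := by
    intro a b ha hb
    rw [hL] at ha hb ⊢
    intro y hy
    have h1 := ha y hy; have h2 := hb y hy
    simp only [canPair] at h1 h2 ⊢
    simp only [Prod.fst_add, Prod.snd_add, LinearMap.add_apply, map_add]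
    linarith
  smul_mem' := by
    intro c a ha
    have ha' : a ∈ L := ha
    show c • a ∈ L
    rw [hL] at ha' ⊢
    have ha := ha'
    intro y hy
    have h1 := ha y hy
    simp only [canPair] at h1 ⊢
    simp only [Prod.smul_fst, Prod.smul_snd, LinearMap.smul_apply, map_smul,
      smul_eq_mul]
    rw [← mul_add, h1, mul_zero]

@[simp] lemma mem_lagSub {L : Set (V × Module.Dual ℝ V)} {hL : IsLagrangian L}
    {x} : x ∈ lagSub L hL ↔ x ∈ L := Iff.rfl

lemma lagSub_eq_orthogonal {L : Set (V × Module.Dual ℝ V)} (hL : IsLagrangian L) :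
    B.orthogonal (lagSub L hL) = lagSub L hL := by
  ext x
  rw [LinearMap.BilinForm.mem_orthogonal_iff]
  constructor
  · intro h
    show x ∈ L
    rw [hL]
    intro y hy
    have := h y hy
    rw [B_symm] at this
    simpa [canPair] using this
  · intro hx y hy
    have : x ∈ {z | ∀ y ∈ L, canPair z y = 0} := hL ▸ hx
    have := this y hy
    rw [B_symm]
    simpa [canPair] using this

section FD
variable [FiniteDimensional ℝ V]

omit [FiniteDimensional ℝ V] in
lemma orth_sup {M N : Submodule ℝ ((V × Module.Dual ℝ V) × (V × Module.Dual ℝ V))} :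
    B2.orthogonal (M ⊔ N) = B2.orthogonal M ⊓ B2.orthogonal N := by
  ext x
  simp only [LinearMap.BilinForm.mem_orthogonal_iff, Submodule.mem_inf]
  constructor
  · intro h
    exact ⟨fun n hn => h n (Submodule.mem_sup_left hn),
           fun n hn => h n (Submodule.mem_sup_right hn)⟩
  · rintro ⟨h1, h2⟩ n hn
    rcases Submodule.mem_sup.mp hn with ⟨m, hm, k, hk, rfl⟩
    have e1 := h1 m hm
    have e2 := h2 k hk
    simp [e1, e2]

lemma orth_inf {M N : Submodule ℝ ((V × Module.Dual ℝ V) × (V × Module.Dual ℝ V))} :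
    B2.orthogonal (M ⊓ N) = B2.orthogonal M ⊔ B2.orthogonal N := by
  have key : M ⊓ N = B2.orthogonal (B2.orthogonal M ⊔ B2.orthogonal N) := by
    rw [orth_sup, LinearMap.BilinForm.orthogonal_orthogonal B2_nondeg B2_isRefl,
      LinearMap.BilinForm.orthogonal_orthogonal B2_nondeg B2_isRefl]
  rw [key, LinearMap.BilinForm.orthogonal_orthogonal B2_nondeg B2_isRefl]

end FD

/-- The "coisotropic" diagonal constraint submodule. -/
def Cmod : Submodule ℝ ((V × Module.Dual ℝ V) × (V × Module.Dual ℝ V)) where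
  carrier := {a | a.1.1 = a.2.1}
  zero_mem' := rfl
  add_mem' := by intro a b ha hb; simp_all [Set.mem_setOf_eq]
  smul_mem' := by intro c a ha; simp_all [Set.mem_setOf_eq]

@[simp] lemma mem_Cmod {a : (V × Module.Dual ℝ V) × (V × Module.Dual ℝ V)} :
    a ∈ Cmod ↔ a.1.1 = a.2.1 := Iff.rfl

/-- The addition map `((v,α),(w,β)) ↦ (v, α + β)`. -/
def phi : ((V × Module.Dual ℝ V) × (V × Module.Dual ℝ V)) →ₗ[ℝ] (V × Module.Dual ℝ V) where
  toFun a := (a.1.1, a.1.2 + a.2.2)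
  map_add' a b := by simp [Prod.ext_iff]; abel
  map_smul' c a := by simp [Prod.ext_iff, smul_add]

@[simp] lemma phi_apply (a : (V × Module.Dual ℝ V) × (V × Module.Dual ℝ V)) :
    phi a = (a.1.1, a.1.2 + a.2.2) := rfl

lemma B_phi_phi {a b : (V × Module.Dual ℝ V) × (V × Module.Dual ℝ V)}
    (ha : a ∈ Cmod) (hb : b ∈ Cmod) : B (phi a) (phi b) = B2 a b := by
  rw [mem_Cmod] at ha hb
  simp [ha, hb]
  ring

lemma orth_Cmod {a : (V × Module.Dual ℝ V) × (V × Module.Dual ℝ V)}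
    (h : a ∈ B2.orthogonal (Cmod (V := V))) : a ∈ Cmod (V := V) ∧ phi a = 0 := by
  rw [LinearMap.BilinForm.mem_orthogonal_iff] at h
  have h1 : a.1.1 = 0 := by
    rw [← Module.forall_dual_apply_eq_zero_iff ℝ a.1.1]
    intro γ
    have := h ((0, γ), (0, 0)) rfl
    simpa [LinearMap.BilinForm.IsOrtho] using this
  have h2 : a.2.1 = 0 := by
    rw [← Module.forall_dual_apply_eq_zero_iff ℝ a.2.1]
    intro γ
    have := h ((0, 0), (0, γ)) rfl
    simpa [LinearMap.BilinForm.IsOrtho] using this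
  have h3 : a.1.2 + a.2.2 = 0 := by
    ext w
    have := h ((w, 0), (w, 0)) rfl
    simpa [LinearMap.BilinForm.IsOrtho] using this
  refine ⟨by simp [h1, h2], ?_⟩
  simp [h1, h3, Prod.ext_iff]

lemma orth_prod {M N : Submodule ℝ (V × Module.Dual ℝ V)} :
    B2.orthogonal (M.prod N) = (B.orthogonal M).prod (B.orthogonal N) := by
  ext a
  simp only [LinearMap.BilinForm.mem_orthogonal_iff, Submodule.mem_prod]
  constructor
  · intro h
    constructor
    · intro m hm
      have := h (m, 0) ⟨hm, Submodule.zero_mem N⟩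
      simpa [LinearMap.BilinForm.IsOrtho] using this
    · intro n hn
      have := h (0, n) ⟨Submodule.zero_mem M, hn⟩
      simpa [LinearMap.BilinForm.IsOrtho] using this
  · rintro ⟨h1, h2⟩ n ⟨hn1, hn2⟩
    have e1 := h1 n.1 hn1
    have e2 := h2 n.2 hn2
    simp [e1, e2]

end TangAux

/-- The tangential product `L₁ ⋆ L₂ := {(v, α + β) : (v, α) ∈ L₁, (v, β) ∈ L₂}`
of two Lagrangian subspaces of `V ⊕ V*` is again a Lagrangian subspace. -/
theorem tangential_product_lagrangian
    {V : Type*} [AddCommGroup V] [Module ℝ V] [FiniteDimensional ℝ V]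
    (L₁ L₂ : Set (V × Module.Dual ℝ V))
    (hL₁ : IsLagrangian L₁) (hL₂ : IsLagrangian L₂) :
    IsLagrangian {x : V × Module.Dual ℝ V |
      ∃ (v : V) (α β : Module.Dual ℝ V), (v, α) ∈ L₁ ∧ (v, β) ∈ L₂ ∧ x = (v, α + β)} := by
  open TangAux in
  set P : Set (V × Module.Dual ℝ V) := {x : V × Module.Dual ℝ V |
      ∃ (v : V) (α β : Module.Dual ℝ V), (v, α) ∈ L₁ ∧ (v, β) ∈ L₂ ∧ x = (v, α + β)} with hP
  have pair₁ : ∀ x ∈ L₁, ∀ y ∈ L₁, canPair x y = 0 := by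
    intro x hx; rw [hL₁] at hx; exact hx
  have pair₂ : ∀ x ∈ L₂, ∀ y ∈ L₂, canPair x y = 0 := by
    intro x hx; rw [hL₂] at hx; exact hx
  apply Set.eq_of_subset_of_subset
  · -- isotropy: easy direction
    rintro x ⟨v, α, β, h1, h2, rfl⟩ y ⟨w, γ, δ, h3, h4, rfl⟩
    have e1 := pair₁ _ h1 _ h3
    have e2 := pair₂ _ h2 _ h4
    simp only [canPair, LinearMap.add_apply] at e1 e2 ⊢
    linarith
  · -- hard direction
    intro x hx
    set M₁ := lagSub L₁ hL₁
    set M₂ := lagSub L₂ hL₂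
    set M := M₁.prod M₂ with hM
    have hMlag : (B2 (V := V)).orthogonal M = M := by
      rw [hM, orth_prod, lagSub_eq_orthogonal, lagSub_eq_orthogonal]
    set a₀ : (V × Module.Dual ℝ V) × (V × Module.Dual ℝ V) := ((x.1, x.2), (x.1, 0)) with ha₀
    have ha₀C : a₀ ∈ Cmod (V := V) := rfl
    have hphia₀ : phi a₀ = x := by simp [ha₀]
    have hmem : a₀ ∈ (B2 (V := V)).orthogonal (M ⊓ Cmod) := by
      rw [LinearMap.BilinForm.mem_orthogonal_iff]
      rintro n ⟨hnM, hnC⟩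
      have hn1 : (n.1.1, n.1.2) ∈ L₁ := hnM.1
      have hn2' : n.2 ∈ L₂ := hnM.2
      have hnC' : n.1.1 = n.2.1 := hnC
      have hn2 : (n.1.1, n.2.2) ∈ L₂ := by rwa [hnC', Prod.mk.eta]
      have hphin : phi n ∈ P := ⟨n.1.1, n.1.2, n.2.2, hn1, hn2, rfl⟩
      have := hx (phi n) hphin
      have key : B (phi a₀) (phi n) = 0 := by
        rw [hphia₀]
        simpa [canPair] using this
      rw [B_phi_phi ha₀C hnC'] at key
      show B2 n a₀ = 0
      rw [B2_symm]; exact key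
    rw [orth_inf, hMlag] at hmem
    rcases Submodule.mem_sup.mp hmem with ⟨l, hl, c, hc, hsum⟩
    obtain ⟨hcC, hphic⟩ := orth_Cmod hc
    have hlC : l ∈ Cmod (V := V) := by
      have : l = a₀ - c := by rw [← hsum]; abel
      rw [this]
      exact Submodule.sub_mem _ ha₀C hcC
    have hphil : phi l = x := by
      have : phi a₀ = phi l + phi c := by rw [← hsum, map_add]
      rw [hphic, add_zero] at this
      rw [← this, hphia₀]
    rw [mem_Cmod] at hlC
    refine ⟨l.1.1, l.1.2, l.2.2, ?_, ?_, ?_⟩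
    · have : l.1 ∈ L₁ := hl.1
      rwa [Prod.mk.eta]
    · have h2 : l.2 ∈ L₂ := hl.2
      rw [hlC, Prod.mk.eta]
      exact h2
    · rw [← hphil]; rfl
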